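/- Let P be a Borel probability measure on Ω, μ a Borel probability measure on Ω×M whose marginal on Ω is P, and ω ↦ μ_ω a disintegration of μ over P (a measurable family of Borel probability measures on M with ∫_{Ω×M} h dμ = ∫_Ω ∫_M h(ω,x) dμ_ω(x) dP(ω) for all bounded measurable h). Fix n ∈ ℕ, ε > 0 and δ ∈ (0,1). Then the map ω ↦ S(ω,n,ε,δ) is measurable with respect to the P-completion of the Borel σ-algebra of Ω. -/

import Mathlib

open Set Filter Topology MeasureTheory ENNReal NNReal

noncomputable section

namespace Paper

variable {Ω M : Type*} [MetricSpace Ω] [MetricSpace M]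

/-- Fiber forward iterates `F_ω^n = F_{θ^{n-1}ω} ∘ ⋯ ∘ F_ω`. -/
def fIter (θ : Ω → Ω) (F : Ω → M → M) (ω : Ω) : ℕ → M → M
  | 0 => id
  | n + 1 => F (θ^[n] ω) ∘ fIter θ F ω n

/-- Fiber Bowen metric `d_ω^n`. -/
def dBowen (θ : Ω → Ω) (F : Ω → M → M) (ω : Ω) (n : ℕ) (x y : M) : ℝ :=
  ((Finset.range n).sup fun i => nndist (fIter θ F ω i x) (fIter θ F ω i y) : ℝ≥0)

/-- `S(ω,n,ε,δ) = min{S(ω,n,ε,K) : K ⊆ M Borel, μ_ω(K) ≥ 1-δ}`, where `S(ω,n,ε,K)`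
is the smallest cardinality of an `(ω,ε,n)`-spanning subset of `K`. -/
def Smin [MeasurableSpace M] (θ : Ω → Ω) (F : Ω → M → M) (κ : Ω → Measure M)
    (ω : Ω) (n : ℕ) (ε δ : ℝ) : ℕ :=
  sInf {m : ℕ | ∃ K : Set M, MeasurableSet K ∧ 1 - ENNReal.ofReal δ ≤ κ ω K ∧
    ∃ G : Finset M, (↑G : Set M) ⊆ K ∧
      (∀ y ∈ K, ∃ x ∈ G, dBowen θ F ω n x y ≤ ε) ∧ G.card = m}

section Aux
variable {θ : Ω → Ω} {F : Ω → M → M}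

lemma continuous_fIter (hθ : Continuous θ) (hF : Continuous fun p : Ω × M => F p.1 p.2) (i : ℕ) :
    Continuous fun p : Ω × M => fIter θ F p.1 i p.2 := by
  induction i with
  | zero => exact continuous_snd
  | succ i ih =>
      have h : (fun p : Ω × M => fIter θ F p.1 (i + 1) p.2)
          = fun p : Ω × M => F (θ^[i] p.1) (fIter θ F p.1 i p.2) := rfl
      rw [h]
      exact hF.comp ((((hθ.iterate i)).comp continuous_fst).prodMk ih)

lemma dBowen_le_iff {ω : Ω} {n : ℕ} {x y : M} {c : ℝ} (hc : 0 ≤ c) :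
    dBowen θ F ω n x y ≤ c ↔ ∀ i < n, dist (fIter θ F ω i x) (fIter θ F ω i y) ≤ c := by
  rw [dBowen, ← Real.le_toNNReal_iff_coe_le hc, Finset.sup_le_iff]
  simp only [Finset.mem_range]
  refine forall₂_congr fun i hi => ?_
  rw [Real.le_toNNReal_iff_coe_le hc, coe_nndist]

lemma dBowen_nonneg {ω : Ω} {n : ℕ} {x y : M} : 0 ≤ dBowen θ F ω n x y := NNReal.coe_nonneg _

lemma dist_le_dBowen {ω : Ω} {n i : ℕ} {x y : M} (hi : i < n) :
    dist (fIter θ F ω i x) (fIter θ F ω i y) ≤ dBowen θ F ω n x y := by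
  rw [dist_nndist]
  exact_mod_cast Finset.le_sup (f := fun i => nndist (fIter θ F ω i x) (fIter θ F ω i y))
    (Finset.mem_range.2 hi)

lemma dBowen_self {ω : Ω} {n : ℕ} {x : M} : dBowen θ F ω n x x = 0 :=
  le_antisymm ((dBowen_le_iff le_rfl).2 fun i _ => by simp) dBowen_nonneg

lemma dBowen_triangle {ω : Ω} {n : ℕ} {x y z : M} :
    dBowen θ F ω n x z ≤ dBowen θ F ω n x y + dBowen θ F ω n y z := by
  refine (dBowen_le_iff (add_nonneg dBowen_nonneg dBowen_nonneg)).2 fun i hi => ?_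
  exact (dist_triangle _ _ _).trans (add_le_add (dist_le_dBowen hi) (dist_le_dBowen hi))

lemma continuous_dBowen (hθ : Continuous θ) (hF : Continuous fun p : Ω × M => F p.1 p.2) (n : ℕ) :
    Continuous fun p : Ω × M × M => dBowen θ F p.1 n p.2.1 p.2.2 := by
  have key : ∀ s : Finset ℕ, Continuous fun p : Ω × M × M =>
      ((s.sup fun i => nndist (fIter θ F p.1 i p.2.1) (fIter θ F p.1 i p.2.2) : ℝ≥0) : ℝ) := by
    intro s
    induction s using Finset.induction with
    | empty => simpa using continuous_const
    | @insert a s ha ih =>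
        simp only [Finset.sup_insert, NNReal.coe_max]
        refine Continuous.max ?_ ih
        have h1 : Continuous fun p : Ω × M × M => fIter θ F p.1 a p.2.1 :=
          (continuous_fIter hθ hF a).comp (continuous_fst.prodMk (continuous_fst.comp continuous_snd))
        have h2 : Continuous fun p : Ω × M × M => fIter θ F p.1 a p.2.2 :=
          (continuous_fIter hθ hF a).comp (continuous_fst.prodMk (continuous_snd.comp continuous_snd))
        simpa only [← dist_nndist] using h1.dist h2
  exact key (Finset.range n)

lemma dBowen_unif [CompactSpace Ω] [CompactSpace M]
    (hθ : Continuous θ) (hF : Continuous fun p : Ω × M => F p.1 p.2) (n : ℕ)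
    {c : ℝ} (hc : 0 < c) :
    ∃ η > 0, ∀ (ω : Ω) (x y : M), dist x y ≤ η → dBowen θ F ω n x y ≤ c := by
  have key : ∀ i : ℕ, ∃ η > 0, ∀ (ω : Ω) (x y : M), dist x y ≤ η →
      dist (fIter θ F ω i x) (fIter θ F ω i y) ≤ c := by
    intro i
    have hu : UniformContinuous fun p : Ω × M => fIter θ F p.1 i p.2 :=
      CompactSpace.uniformContinuous_of_continuous (continuous_fIter hθ hF i)
    rw [Metric.uniformContinuous_iff] at hu
    obtain ⟨η, hη, h⟩ := hu c hc
    refine ⟨η / 2, by positivity, fun ω x y hxy => ?_⟩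
    have hd : dist ((ω, x) : Ω × M) (ω, y) < η := by
      rw [Prod.dist_eq]
      simp only [dist_self]
      have : dist x y < η := lt_of_le_of_lt hxy (by linarith)
      simpa [max_lt_iff, hη] using (⟨hη, this⟩ : 0 < η ∧ dist x y < η)
    exact (h hd).le
  choose η hη hle using key
  rcases Nat.eq_zero_or_pos n with hn | hn
  · exact ⟨1, one_pos, fun ω x y _ => by subst hn; simpa [dBowen] using hc.le⟩
  · have hne : (Finset.range n).Nonempty := ⟨0, Finset.mem_range.2 hn⟩
    refine ⟨(Finset.range n).inf' hne η, ?_, fun ω x y hxy => ?_⟩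
    · exact (Finset.lt_inf'_iff hne).2 fun i _ => hη i
    · refine (dBowen_le_iff hc.le).2 fun i hi => hle i ω x y (hxy.trans ?_)
      exact Finset.inf'_le _ (Finset.mem_range.2 hi)

lemma smin_le_iff [MeasurableSpace M] [BorelSpace M] [CompactSpace M]
    (hθ : Continuous θ) (hF : Continuous fun p : Ω × M => F p.1 p.2)
    (κ : Ω → Measure M) (hκprob : ∀ ω, IsProbabilityMeasure (κ ω))
    (n : ℕ) {ε δ : ℝ} (hε : 0 < ε) (hδ1 : δ < 1) (ω : Ω) (m : ℕ) :
    Smin θ F κ ω n ε δ ≤ m ↔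
      ∃ v : Fin m → M, 1 - ENNReal.ofReal δ ≤ κ ω {y | ∃ i, dBowen θ F ω n (v i) y ≤ ε} := by
  haveI := hκprob ω
  have hc : (0 : ℝ≥0∞) < 1 - ENNReal.ofReal δ :=
    tsub_pos_iff_lt.2 (ENNReal.ofReal_lt_one.2 hδ1)
  have hcont1 : ∀ x : M, Continuous fun y => dBowen θ F ω n x y := fun x =>
    (continuous_dBowen hθ hF n).comp
      (continuous_const.prodMk (continuous_const.prodMk continuous_id))
  set S := {m : ℕ | ∃ K : Set M, MeasurableSet K ∧ 1 - ENNReal.ofReal δ ≤ κ ω K ∧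
    ∃ G : Finset M, (↑G : Set M) ⊆ K ∧
      (∀ y ∈ K, ∃ x ∈ G, dBowen θ F ω n x y ≤ ε) ∧ G.card = m} with hSdef
  have hSne : S.Nonempty := by
    obtain ⟨t, ht⟩ := IsCompact.elim_finite_subcover (isCompact_univ (X := M))
      (fun x : M => {y | dBowen θ F ω n x y < ε})
      (fun x => isOpen_lt (hcont1 x) continuous_const)
      (fun y _ => mem_iUnion.2 ⟨y, show dBowen θ F ω n y y < ε by rw [dBowen_self]; exact hε⟩)
    refine ⟨t.card, univ, MeasurableSet.univ, by simpa using tsub_le_self, t, subset_univ _,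
      fun y hy => ?_, rfl⟩
    obtain ⟨x, hxt, hxy⟩ := mem_iUnion₂.1 (ht hy)
    exact ⟨x, hxt, le_of_lt hxy⟩
  constructor
  · intro h
    obtain ⟨K, hK, hκK, G, hGK, hspan, hcard⟩ := Nat.sInf_mem hSne
    have hKne : K.Nonempty := by
      rcases K.eq_empty_or_nonempty with hKe | hKne
      · rw [hKe, measure_empty] at hκK
        exact absurd hκK hc.not_ge
      · exact hKne
    obtain ⟨y₀, hy₀⟩ := hKne
    obtain ⟨x₀, hx₀G, _⟩ := hspan y₀ hy₀
    refine ⟨fun i => G.toList.getD i x₀, le_trans hκK (measure_mono fun y hy => ?_)⟩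
    obtain ⟨x, hxG, hxy⟩ := hspan y hy
    obtain ⟨j, hj, hjx⟩ := List.mem_iff_getElem.1 (Finset.mem_toList.2 hxG)
    have hjm : j < m := by
      have h1 : G.toList.length = G.card := Finset.length_toList G
      have h2 : G.card ≤ m := hcard.le.trans h
      omega
    refine ⟨⟨j, hjm⟩, ?_⟩
    show dBowen θ F ω n (G.toList.getD j x₀) y ≤ ε
    rw [List.getD_eq_getElem _ _ hj, hjx]
    exact hxy
  · rintro ⟨v, hv⟩
    classical
    have hKcl : IsClosed {y | ∃ i, dBowen θ F ω n (v i) y ≤ ε} := by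
      have h1 : {y | ∃ i, dBowen θ F ω n (v i) y ≤ ε}
          = ⋃ i, {y | dBowen θ F ω n (v i) y ≤ ε} := by
        ext y; simp
      rw [h1]
      exact isClosed_iUnion_of_finite fun i => isClosed_le (hcont1 (v i)) continuous_const
    have hmem : (Finset.image v Finset.univ).card ∈ S := by
      refine ⟨{y | ∃ i, dBowen θ F ω n (v i) y ≤ ε}, hKcl.measurableSet, hv,
        Finset.image v Finset.univ, ?_, ?_, rfl⟩
      · intro x hx
        obtain ⟨i, _, rfl⟩ := Finset.mem_image.1 hx
        exact ⟨i, by rw [dBowen_self]; exact hε.le⟩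
      · rintro y ⟨i, hi⟩
        exact ⟨v i, Finset.mem_image.2 ⟨i, Finset.mem_univ _, rfl⟩, hi⟩
    have hle : (Finset.image v Finset.univ).card ≤ m :=
      le_trans Finset.card_image_le (le_of_eq (by simp [Finset.card_univ]))
    exact le_trans (Nat.sInf_le hmem) hle

end Aux

/-- if `ω ↦ μ_ω` is a disintegration over `P` of a measure `μ` on
`Ω × M` with marginal `P`, then `ω ↦ S(ω,n,ε,δ)` is measurable with respect to the
`P`-completion of the Borel σ-algebra of `Ω`. -/
theorem Smin_null_measurable
    [CompactSpace Ω] [CompactSpace M]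
    [MeasurableSpace Ω] [BorelSpace Ω] [MeasurableSpace M] [BorelSpace M]
    (θ : Ω → Ω) (hθ : Continuous θ)
    (F : Ω → M → M) (hF : Continuous fun p : Ω × M => F p.1 p.2)
    (P : Measure Ω) [IsProbabilityMeasure P]
    (μ : Measure (Ω × M)) [IsProbabilityMeasure μ]
    (κ : Ω → Measure M)
    -- ω ↦ μ_ω is a measurable family of Borel probability measures
    (hκmeas : ∀ B : Set M, MeasurableSet B → Measurable fun ω => κ ω B)
    (hκprob : ∀ ω, IsProbabilityMeasure (κ ω))
    -- the marginal of μ on Ω is P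
    (hmarg : Measure.map Prod.fst μ = P)
    -- ω ↦ μ_ω disintegrates μ over P
    (hdis : ∀ s : Set (Ω × M), MeasurableSet s →
      μ s = ∫⁻ ω, κ ω {x : M | (ω, x) ∈ s} ∂P)
    (n : ℕ) (ε δ : ℝ) (hε : 0 < ε) (hδ0 : 0 < δ) (hδ1 : δ < 1) :
    NullMeasurable (fun ω => Smin θ F κ ω n ε δ) P := by
  rcases isEmpty_or_nonempty Ω with hE | hNE
  · exact (measurable_of_empty _).nullMeasurable
  have hM : Nonempty M := by
    obtain ⟨ω⟩ := hNE
    haveI := hκprob ω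
    by_contra hM
    rw [not_nonempty_iff] at hM
    have h1 : κ ω univ = 1 := measure_univ
    rw [Set.univ_eq_empty_iff.2 hM, measure_empty] at h1
    exact zero_ne_one h1
  set c : ℝ≥0∞ := 1 - ENNReal.ofReal δ with hcdef
  have hκKer : Measurable κ := Measure.measurable_of_measurable_coe _ hκmeas
  -- measurability of the basic sets
  have hmeasB : ∀ (m : ℕ) (v : Fin m → M) (q : ℝ),
      MeasurableSet {ω | c ≤ κ ω {y | ∃ i, dBowen θ F ω n (v i) y ≤ q}} := by
    intro m v q
    have hs : MeasurableSet {p : Ω × M | ∃ i, dBowen θ F p.1 n (v i) p.2 ≤ q} := by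
      have h1 : {p : Ω × M | ∃ i, dBowen θ F p.1 n (v i) p.2 ≤ q}
          = ⋃ i, {p : Ω × M | dBowen θ F p.1 n (v i) p.2 ≤ q} := by
        ext p; simp
      rw [h1]
      refine MeasurableSet.iUnion fun i => ?_
      have hcont : Continuous fun p : Ω × M => dBowen θ F p.1 n (v i) p.2 :=
        (continuous_dBowen hθ hF n).comp
          (continuous_fst.prodMk (continuous_const.prodMk continuous_snd))
      exact (isClosed_le hcont continuous_const).measurableSet
    have hm : Measurable fun ω => κ ω
        (Prod.mk ω ⁻¹' {p : Ω × M | ∃ i, dBowen θ F p.1 n (v i) p.2 ≤ q}) :=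
      ProbabilityTheory.Kernel.measurable_kernel_prodMk_left_of_finite (κ := ⟨κ, hκKer⟩) hs
        (fun a => by have := hκprob a; infer_instance)
    exact measurableSet_le measurable_const hm
  -- measurability of the sets {ω | Smin ω ≤ m}
  have hT : ∀ m : ℕ, MeasurableSet
      {ω | ∃ v : Fin m → M, c ≤ κ ω {y | ∃ i, dBowen θ F ω n (v i) y ≤ ε}} := by
    intro m
    obtain ⟨D, hDc, hDd⟩ := TopologicalSpace.exists_countable_dense M
    have hVc : {v : Fin m → M | ∀ i, v i ∈ D}.Countable := Set.countable_pi fun _ => hDc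
    have hEq : {ω | ∃ v : Fin m → M, c ≤ κ ω {y | ∃ i, dBowen θ F ω n (v i) y ≤ ε}}
        = ⋂ q ∈ {q : ℚ | ε < (q : ℝ)}, ⋃ v ∈ {v : Fin m → M | ∀ i, v i ∈ D},
            {ω | c ≤ κ ω {y | ∃ i, dBowen θ F ω n (v i) y ≤ (q : ℝ)}} := by
      apply Set.Subset.antisymm
      · rintro ω ⟨v, hv⟩
        refine mem_iInter₂.2 fun q hq => ?_
        obtain ⟨η, hη, hle⟩ := dBowen_unif hθ hF n (c := (q : ℝ) - ε) (by simpa using hq)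
        have hch : ∀ i, ∃ x ∈ D, dist (v i) x < η := fun i =>
          Metric.mem_closure_iff.1 (hDd (v i)) η hη
        choose v' hv'D hv'd using hch
        refine mem_iUnion₂.2 ⟨v', hv'D, le_trans hv (measure_mono fun y hy => ?_)⟩
        obtain ⟨i, hi⟩ := hy
        refine ⟨i, ?_⟩
        calc dBowen θ F ω n (v' i) y
            ≤ dBowen θ F ω n (v' i) (v i) + dBowen θ F ω n (v i) y := dBowen_triangle
          _ ≤ ((q : ℝ) - ε) + ε :=
              add_le_add (hle ω _ _ (by rw [dist_comm]; exact (hv'd i).le)) hi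
          _ = (q : ℝ) := by ring
      · intro ω hω
        rw [mem_iInter₂] at hω
        obtain ⟨q₀, hq₀⟩ := exists_rat_gt ε
        haveI : Nonempty {q : ℚ // ε < (q : ℝ)} := ⟨⟨q₀, hq₀⟩⟩
        set Z : {q : ℚ // ε < (q : ℝ)} → Set (Fin m → M) := fun q =>
          closure {v : Fin m → M | c ≤ κ ω {y | ∃ i, dBowen θ F ω n (v i) y ≤ (q : ℝ)}}
          with hZdef
        have hmono : ∀ q q' : {q : ℚ // ε < (q : ℝ)}, (q : ℚ) ≤ (q' : ℚ) → Z q ⊆ Z q' := by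
          intro q q' hqq'
          refine closure_mono fun v hv => le_trans hv (measure_mono ?_)
          rintro y ⟨i, hi⟩
          exact ⟨i, hi.trans (by exact_mod_cast hqq')⟩
        have hdir : Directed (· ⊇ ·) Z := by
          intro q q'
          refine ⟨⟨min (q : ℚ) (q' : ℚ), ?_⟩, hmono _ _ (min_le_left _ _),
            hmono _ _ (min_le_right _ _)⟩
          rcases le_total (q : ℚ) (q' : ℚ) with h | h
          · rw [min_eq_left h]; exact q.2
          · rw [min_eq_right h]; exact q'.2
        have hne : ∀ q, (Z q).Nonempty := by
          intro q
          obtain ⟨v, _, hv⟩ := mem_iUnion₂.1 (hω (q : ℚ) q.2)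
          exact ⟨v, subset_closure hv⟩
        obtain ⟨vs, hvs⟩ :=
          IsCompact.nonempty_iInter_of_directed_nonempty_isCompact_isClosed Z hdir hne
            (fun q => isClosed_closure.isCompact) (fun q => isClosed_closure)
        have hstar : ∀ q : {q : ℚ // ε < (q : ℝ)},
            c ≤ κ ω {y | ∃ i, dBowen θ F ω n (vs i) y ≤ (q : ℝ)} := by
          intro q
          obtain ⟨q', hq'1, hq'2⟩ := exists_rat_btwn q.2
          obtain ⟨η, hη, hle⟩ := dBowen_unif hθ hF n (c := (q : ℝ) - (q' : ℝ)) (by linarith)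
          have hcl : vs ∈ Z ⟨q', hq'1⟩ := mem_iInter.1 hvs _
          obtain ⟨v', hv'C, hv'd⟩ := Metric.mem_closure_iff.1 hcl η hη
          refine le_trans hv'C (measure_mono ?_)
          rintro y ⟨i, hi⟩
          refine ⟨i, ?_⟩
          calc dBowen θ F ω n (vs i) y
              ≤ dBowen θ F ω n (vs i) (v' i) + dBowen θ F ω n (v' i) y := dBowen_triangle
            _ ≤ ((q : ℝ) - (q' : ℝ)) + (q' : ℝ) :=
                add_le_add (hle ω _ _ ((dist_le_pi_dist vs v' i).trans hv'd.le)) hi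
            _ = (q : ℝ) := by ring
        refine ⟨vs, ?_⟩
        have hcont1 : ∀ x : M, Continuous fun y => dBowen θ F ω n x y := fun x =>
          (continuous_dBowen hθ hF n).comp
            (continuous_const.prodMk (continuous_const.prodMk continuous_id))
        have hBcl : ∀ r : ℝ, IsClosed {y | ∃ i, dBowen θ F ω n (vs i) y ≤ r} := by
          intro r
          have h1 : {y | ∃ i, dBowen θ F ω n (vs i) y ≤ r}
              = ⋃ i, {y | dBowen θ F ω n (vs i) y ≤ r} := by ext y; simp
          rw [h1]
          exact isClosed_iUnion_of_finite fun i =>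
            isClosed_le (hcont1 (vs i)) continuous_const
        have hBeq : {y | ∃ i, dBowen θ F ω n (vs i) y ≤ ε}
            = ⋂ q : {q : ℚ // ε < (q : ℝ)}, {y | ∃ i, dBowen θ F ω n (vs i) y ≤ (q : ℝ)} := by
          ext y
          simp only [mem_iInter, mem_setOf_eq]
          constructor
          · rintro ⟨i, hi⟩ q
            exact ⟨i, hi.trans q.2.le⟩
          · intro hy
            by_contra hcon
            push_neg at hcon
            obtain ⟨i₀, _⟩ := hy ⟨q₀, hq₀⟩
            have hne' : (Finset.univ : Finset (Fin m)).Nonempty := ⟨i₀, Finset.mem_univ _⟩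
            have hr : ε < Finset.univ.inf' hne' fun i => dBowen θ F ω n (vs i) y :=
              (Finset.lt_inf'_iff hne').2 fun i _ => hcon i
            obtain ⟨q, hq1, hq2⟩ := exists_rat_btwn hr
            obtain ⟨i, hi⟩ := hy ⟨q, hq1⟩
            have hle' : (Finset.univ.inf' hne' fun i => dBowen θ F ω n (vs i) y)
                ≤ dBowen θ F ω n (vs i) y := Finset.inf'_le _ (Finset.mem_univ i)
            exact absurd (hle'.trans hi) (not_le.2 hq2)
        have hdirB : Directed (· ⊇ ·) fun q : {q : ℚ // ε < (q : ℝ)} =>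
            {y | ∃ i, dBowen θ F ω n (vs i) y ≤ (q : ℝ)} := by
          intro q q'
          refine ⟨⟨min (q : ℚ) (q' : ℚ), ?_⟩, ?_, ?_⟩
          · rcases le_total (q : ℚ) (q' : ℚ) with h | h
            · rw [min_eq_left h]; exact q.2
            · rw [min_eq_right h]; exact q'.2
          · rintro y ⟨i, hi⟩
            refine ⟨i, hi.trans ?_⟩
            exact_mod_cast min_le_left (q : ℚ) (q' : ℚ)
          · rintro y ⟨i, hi⟩
            refine ⟨i, hi.trans ?_⟩
            exact_mod_cast min_le_right (q : ℚ) (q' : ℚ)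
        haveI := hκprob ω
        rw [hBeq, Directed.measure_iInter
          (fun q : {q : ℚ // ε < (q : ℝ)} =>
            ((hBcl (q : ℝ)).measurableSet).nullMeasurableSet) hdirB
          ⟨⟨q₀, hq₀⟩, measure_ne_top _ _⟩]
        exact le_iInf fun q => hstar q
    rw [hEq]
    exact MeasurableSet.biInter (Set.to_countable _) fun q _ =>
      MeasurableSet.biUnion hVc fun v _ => hmeasB m v (q : ℝ)
  have hSm : ∀ m : ℕ, MeasurableSet {ω | Smin θ F κ ω n ε δ ≤ m} := by
    intro m
    have h1 : {ω | Smin θ F κ ω n ε δ ≤ m}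
        = {ω | ∃ v : Fin m → M, c ≤ κ ω {y | ∃ i, dBowen θ F ω n (v i) y ≤ ε}} := by
      ext ω
      exact smin_le_iff hθ hF κ hκprob n hε hδ1 ω m
    rw [h1]
    exact hT m
  refine Measurable.nullMeasurable (measurable_to_countable' fun k => ?_)
  rcases k with _ | k
  · have h0 : (fun ω => Smin θ F κ ω n ε δ) ⁻¹' {0} = {ω | Smin θ F κ ω n ε δ ≤ 0} := by
      ext ω; simp [Nat.le_zero]
    rw [h0]
    exact hSm 0
  · have h1 : (fun ω => Smin θ F κ ω n ε δ) ⁻¹' {k + 1}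
        = {ω | Smin θ F κ ω n ε δ ≤ k + 1} \ {ω | Smin θ F κ ω n ε δ ≤ k} := by
      ext ω
      simp only [mem_preimage, mem_singleton_iff, mem_diff, mem_setOf_eq]
      omega
    rw [h1]
    exact (hSm (k + 1)).diff (hSm k)


end Paper
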